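/- arXiv:1912.03159 — 3 statements merged into one kernel-verified Lean document; each statement's English description precedes it below -/
import Mathlib

section
/- Let γ be a positive integer, H ∈ (0,1) a real number, n a natural number, and η_0, …, η_{n-1} ∈ (0,1] real numbers. If ∑_{k<n} ⌈γ·(log η_k / log H)⌉ ≤ γ, then ∏_{k<n} η_k ≥ H. -/
/-- Reliability part of Lemma 1: bounded total steepness in the reliability
dimension implies the reliability target is honored. -/
theorem okpi_reliability_honored
    (γ : ℕ) (hγ : 0 < γ) (H : ℝ) (hH : H ∈ Set.Ioo (0 : ℝ) 1)
    (n : ℕ) (η : ℕ → ℝ) (hη : ∀ k < n, η k ∈ Set.Ioc (0 : ℝ) 1)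
    (hsteep : ∑ k ∈ Finset.range n,
        ⌈(γ : ℝ) * (Real.log (η k) / Real.log H)⌉ ≤ (γ : ℤ)) :
    ∏ k ∈ Finset.range n, η k ≥ H := by
  have hL : Real.log H < 0 := Real.log_neg hH.1 hH.2
  set L := Real.log H with hLdef
  set S := ∑ k ∈ Finset.range n, Real.log (η k) with hS
  -- real-valued sum bound
  have hreal : ∑ k ∈ Finset.range n, (γ : ℝ) * (Real.log (η k) / L) ≤ (γ : ℝ) := by
    calc ∑ k ∈ Finset.range n, (γ : ℝ) * (Real.log (η k) / L)
        ≤ ∑ k ∈ Finset.range n, (⌈(γ : ℝ) * (Real.log (η k) / L)⌉ : ℝ) :=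
          Finset.sum_le_sum fun k _ => Int.le_ceil _
      _ = ((∑ k ∈ Finset.range n, ⌈(γ : ℝ) * (Real.log (η k) / L)⌉ : ℤ) : ℝ) := by
          push_cast; ring
      _ ≤ (γ : ℝ) := by exact_mod_cast hsteep
  have hsum : (γ : ℝ) * (S / L) ≤ (γ : ℝ) := by
    have : ∑ k ∈ Finset.range n, (γ : ℝ) * (Real.log (η k) / L)
        = (γ : ℝ) * (S / L) := by
      rw [hS, Finset.sum_div, Finset.mul_sum]
    linarith [hreal, this ▸ hreal]
  have hγR : (0 : ℝ) < γ := by exact_mod_cast hγ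
  have h1 : S / L ≤ 1 := by
    by_contra h
    push_neg at h
    nlinarith
  have hSL : L ≤ S := by
    have := mul_le_mul_of_nonpos_right h1 hL.le
    rwa [div_mul_cancel₀ _ hL.ne, one_mul] at this
  have hprod : ∏ k ∈ Finset.range n, η k = Real.exp S := by
    rw [hS, Real.exp_sum]
    exact Finset.prod_congr rfl fun k hk =>
      (Real.exp_log (hη k (Finset.mem_range.mp hk)).1).symm
  rw [hprod, ge_iff_le, ← Real.exp_log hH.1]
  exact Real.exp_le_exp.mpr hSL
end

section
/- Let ι be a nonempty finite index type, c : ι → ℝ, d : ι → ℝ, D a real number with ∑_{i∈ι} d i < D, and p : ι → ℝ with p i > 0 for all i. Then the linear cost function a ↦ ∑_{i∈ι} p i · a i attains a minimum on the nonempty set S = {a : ι → ℝ | (∀ i, a i > c i) ∧ ∑_{i∈ι} (d i + 1/(a i − c i)) ≤ D}, i.e., there exists a* ∈ S such that ∑_i p i · a*_i ≤ ∑_i p i · a_i for all a ∈ S. -/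
/-- Existence of an optimal solution to the CPU-assignment problem (11):
the linear CPU cost attains a minimum on the (nonempty) feasible set. -/
theorem okpi_cpu_assignment_min_exists
    (ι : Type*) [Fintype ι] [Nonempty ι] (c d : ι → ℝ) (D : ℝ)
    (hD : ∑ i, d i < D) (p : ι → ℝ) (hp : ∀ i, 0 < p i) :
    ∃ a' ∈ {a : ι → ℝ |
        (∀ i, a i > c i) ∧ ∑ i, (d i + 1 / (a i - c i)) ≤ D},
      ∀ a ∈ {a : ι → ℝ |
        (∀ i, a i > c i) ∧ ∑ i, (d i + 1 / (a i - c i)) ≤ D},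
        ∑ i, p i * a' i ≤ ∑ i, p i * a i := by
  classical
  set S : Set (ι → ℝ) := {a : ι → ℝ |
        (∀ i, a i > c i) ∧ ∑ i, (d i + 1 / (a i - c i)) ≤ D} with hS
  have hE : 0 < D - ∑ i, d i := by linarith
  set E : ℝ := D - ∑ i, d i with hEdef
  set δ : ℝ := E⁻¹ with hδdef
  have hδpos : 0 < δ := inv_pos.mpr hE
  have hNpos : 0 < (Fintype.card ι : ℝ) := by
    exact_mod_cast Fintype.card_pos
  set a0 : ι → ℝ := fun i => c i + (Fintype.card ι : ℝ) / E with ha0def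
  have ha0gt : ∀ i, a0 i - c i = (Fintype.card ι : ℝ) / E := by
    intro i; simp [ha0def]
  have ha0S : a0 ∈ S := by
    constructor
    · intro i
      have : 0 < (Fintype.card ι : ℝ) / E := div_pos hNpos hE
      simp only [ha0def]; linarith
    · have : ∑ i, (d i + 1 / (a0 i - c i)) = ∑ i, d i + E := by
        rw [Finset.sum_add_distrib]
        congr 1
        have : ∀ i ∈ Finset.univ, 1 / (a0 i - c i) = E / (Fintype.card ι : ℝ) := by
          intro i _; rw [ha0gt i, one_div, inv_div]
        rw [Finset.sum_congr rfl this, Finset.sum_const, nsmul_eq_mul]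
        field_simp
        rw [Finset.card_univ]
      rw [this]; simp [hEdef]
  set K : ℝ := ∑ i, p i * a0 i with hK
  set f : (ι → ℝ) → ℝ := fun a => ∑ i, (d i + (max (a i - c i) δ)⁻¹) with hf
  have hfcont : Continuous f := by
    apply continuous_finset_sum
    intro i _
    apply continuous_const.add
    apply Continuous.inv₀
    · exact ((continuous_apply i).sub continuous_const).max continuous_const
    · intro a
      have : δ ≤ max (a i - c i) δ := le_max_right _ _
      linarith [hδpos]
  have hcostcont : Continuous fun a : ι → ℝ => ∑ i, p i * a i := by
    apply continuous_finset_sum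
    intro i _
    exact continuous_const.mul (continuous_apply i)
  set T : Set (ι → ℝ) := {a | (∀ i, c i + δ ≤ a i) ∧ f a ≤ D ∧ ∑ i, p i * a i ≤ K}
    with hT
  -- key: membership transfer
  have hfeq : ∀ a : ι → ℝ, (∀ i, c i + δ ≤ a i) →
      f a = ∑ i, (d i + 1 / (a i - c i)) := by
    intro a ha
    apply Finset.sum_congr rfl
    intro i _
    have : max (a i - c i) δ = a i - c i := max_eq_left (by linarith [ha i])
    rw [this, one_div]
  have hTsubS : T ⊆ S := by
    intro a ha
    obtain ⟨h1, h2, _⟩ := ha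
    refine ⟨fun i => by linarith [h1 i, hδpos], ?_⟩
    rw [← hfeq a h1]; exact h2
  have hSlb : ∀ a ∈ S, ∀ i, c i + δ ≤ a i := by
    intro a ha i
    obtain ⟨h1, h2⟩ := ha
    have hpos : ∀ j, 0 < 1 / (a j - c j) := fun j =>
      div_pos one_pos (by linarith [h1 j])
    have hsum : ∑ j, 1 / (a j - c j) ≤ E := by
      have := Finset.sum_add_distrib (s := (Finset.univ : Finset ι))
        (f := d) (g := fun j => 1 / (a j - c j))
      rw [hEdef]; rw [this] at h2; linarith
    have hone : 1 / (a i - c i) ≤ E :=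
      le_trans (Finset.single_le_sum (f := fun j => 1 / (a j - c j))
        (fun j _ => (hpos j).le) (Finset.mem_univ i)) hsum
    have h3 : (a i - c i)⁻¹ ≤ E := by rwa [one_div] at hone
    have h4 : E⁻¹ ≤ ((a i - c i)⁻¹)⁻¹ :=
      inv_anti₀ (inv_pos.mpr (by linarith [h1 i])) h3
    rw [inv_inv] at h4
    rw [hδdef]; linarith
  have hSinT : ∀ a ∈ S, (∑ i, p i * a i ≤ K) → a ∈ T := by
    intro a ha hcost
    refine ⟨hSlb a ha, ?_, hcost⟩
    rw [hfeq a (hSlb a ha)]; exact ha.2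
  have ha0T : a0 ∈ T := hSinT a0 ha0S le_rfl
  -- T is closed
  have hTclosed : IsClosed T := by
    have h1 : IsClosed {a : ι → ℝ | ∀ i, c i + δ ≤ a i} := by
      have : {a : ι → ℝ | ∀ i, c i + δ ≤ a i} = ⋂ i, {a | c i + δ ≤ a i} := by
        ext a; simp
      rw [this]
      exact isClosed_iInter fun i => isClosed_le continuous_const (continuous_apply i)
    have h2 : IsClosed {a : ι → ℝ | f a ≤ D} := isClosed_le hfcont continuous_const
    have h3 : IsClosed {a : ι → ℝ | ∑ i, p i * a i ≤ K} :=
      isClosed_le hcostcont continuous_const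
    have : T = {a : ι → ℝ | ∀ i, c i + δ ≤ a i} ∩
        ({a : ι → ℝ | f a ≤ D} ∩ {a : ι → ℝ | ∑ i, p i * a i ≤ K}) := by
      ext a; simp [hT, Set.mem_setOf_eq, and_assoc]
    rw [this]
    exact h1.inter (h2.inter h3)
  -- T is bounded: contained in a box
  set B : ℝ := ∑ j, p j * (c j + δ) with hB
  set M : ι → ℝ := fun i => (K - B) / p i + (c i + δ) with hM
  have hTbox : T ⊆ Set.pi Set.univ (fun i => Set.Icc (c i + δ) (M i)) := by
    intro a ha i _
    obtain ⟨h1, _, h3⟩ := ha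
    refine ⟨h1 i, ?_⟩
    have herase : ∑ j ∈ Finset.univ.erase i, p j * (c j + δ) ≤
        ∑ j ∈ Finset.univ.erase i, p j * a j :=
      Finset.sum_le_sum fun j _ =>
        mul_le_mul_of_nonneg_left (h1 j) (hp j).le
    rw [Finset.sum_erase_eq_sub (Finset.mem_univ i),
        Finset.sum_erase_eq_sub (Finset.mem_univ i)] at herase
    have hkey : p i * a i - p i * (c i + δ) ≤ K - B := by
      rw [hB]; linarith
    have hfin : a i - (c i + δ) ≤ (K - B) / p i := by
      rw [le_div_iff₀ (hp i)]; nlinarith [hkey]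
    simp only [hM]
    linarith
  have hboxcompact : IsCompact (Set.pi Set.univ (fun i => Set.Icc (c i + δ) (M i))) :=
    isCompact_univ_pi fun i => isCompact_Icc
  have hTcompact : IsCompact T := hboxcompact.of_isClosed_subset hTclosed hTbox
  obtain ⟨a', ha'T, ha'min⟩ := hTcompact.exists_isMinOn ⟨a0, ha0T⟩
    (hcostcont.continuousOn (s := T))
  refine ⟨a', hTsubS ha'T, ?_⟩
  intro a haS
  by_cases hc : ∑ i, p i * a i ≤ K
  · exact ha'min (hSinT a haS hc)
  · have := ha'min ha0T
    simp only [Set.mem_setOf_eq] at this ⊢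
    push_neg at hc
    calc ∑ i, p i * a' i ≤ K := this
    _ ≤ ∑ i, p i * a i := hc.le
end

section
/- Let n be a natural number and w_0, …, w_{n-1} nonnegative real numbers with ∑_{k<n} w_k < 1. Then there exists a positive integer γ₀ such that for every integer γ ≥ γ₀, ∑_{k<n} ⌈γ·w_k⌉ ≤ γ, where ⌈·⌉ denotes the integer ceiling. -/
/-- Every deployment strictly satisfying the additive KPI constraint is
representable in the expanded graph for all sufficiently large resolutions. -/
theorem okpi_large_resolution_representable
    (n : ℕ) (w : ℕ → ℝ) (hw : ∀ k < n, 0 ≤ w k)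
    (hsum : ∑ k ∈ Finset.range n, w k < 1) :
    ∃ γ₀ : ℕ, 0 < γ₀ ∧ ∀ γ : ℕ, γ₀ ≤ γ →
      ∑ k ∈ Finset.range n, ⌈(γ : ℝ) * w k⌉ ≤ (γ : ℤ) := by
  set S := ∑ k ∈ Finset.range n, w k with hS
  have hpos : 0 < 1 - S := by linarith
  refine ⟨⌈(n : ℝ) / (1 - S)⌉₊ + 1, Nat.succ_pos _, fun γ hγ => ?_⟩
  have hγR : (n : ℝ) / (1 - S) ≤ γ := by
    calc (n : ℝ) / (1 - S) ≤ ⌈(n : ℝ) / (1 - S)⌉₊ := Nat.le_ceil _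
    _ ≤ γ := by exact_mod_cast le_trans (Nat.le_succ _) hγ
  have key : (γ : ℝ) * S + n ≤ γ := by
    have := (div_le_iff₀ hpos).mp hγR
    nlinarith
  have hsum2 : (↑(∑ k ∈ Finset.range n, ⌈(γ : ℝ) * w k⌉) : ℝ) ≤ (γ : ℝ) * S + n := by
    push_cast
    calc ∑ k ∈ Finset.range n, (⌈(γ : ℝ) * w k⌉ : ℝ)
        ≤ ∑ k ∈ Finset.range n, ((γ : ℝ) * w k + 1) := by
          apply Finset.sum_le_sum
          intro k _
          exact le_of_lt (Int.ceil_lt_add_one _)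
      _ = (γ : ℝ) * S + n := by
          rw [Finset.sum_add_distrib, ← Finset.mul_sum]
          simp [hS]
  exact_mod_cast hsum2.trans key
end
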